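/- arXiv:2303.00245 — 5 statements merged into one kernel-verified Lean document; each statement's English description precedes it below -/
import Mathlib

section
/- Let R be a PID and U, W submodules of R^n. If W is a direct summand of R^n, then W ∩ U is a direct summand of U. If moreover U is also a direct summand of R^n, then W ∩ U is a direct summand of R^n. -/
/-- Auxiliary: a submodule whose quotient embeds (via a linear map with that kernel)
into a projective module is a direct summand. Here: if `f : M →ₗ[R] N` and `range f`
is projective, then `ker f` has a complement. -/
theorem aux_ker_isCompl {R M N : Type*} [CommRing R] [AddCommGroup M] [AddCommGroup N]
    [Module R M] [Module R N] (f : M →ₗ[R] N) [Module.Projective R (LinearMap.range f)] :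
    ∃ C : Submodule R M, IsCompl (LinearMap.ker f) C := by
  obtain ⟨s, hs⟩ := f.rangeRestrict.exists_rightInverse_of_surjective
    (LinearMap.range_eq_top.2 f.surjective_rangeRestrict)
  have hproj : LinearMap.IsProj (LinearMap.range s) (s ∘ₗ f.rangeRestrict) := by
    constructor
    · intro x
      exact ⟨f.rangeRestrict x, rfl⟩
    · rintro x ⟨y, rfl⟩
      have hy : f.rangeRestrict (s y) = y := LinearMap.congr_fun hs y
      simp only [LinearMap.comp_apply, hy]
  have hker : LinearMap.ker (s ∘ₗ f.rangeRestrict) = LinearMap.ker f := by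
    ext x
    simp only [LinearMap.mem_ker, LinearMap.comp_apply]
    constructor
    · intro h
      have : f.rangeRestrict (s (f.rangeRestrict x)) = f.rangeRestrict x := by
        rw [← LinearMap.comp_apply, hs, LinearMap.id_apply]
      rw [h, map_zero] at this
      have := congrArg Subtype.val this.symm
      simpa using this
    · intro h
      have hx : f.rangeRestrict x = 0 := by
        ext; simpa using h
      rw [hx, map_zero]
  exact ⟨LinearMap.range s, hker ▸ hproj.isCompl.symm⟩

/-- Let `R` be a PID and `U, W ⊆ R^n`. If `W` is a direct summand of `R^n`, then
`W ⊓ U` is a direct summand of `U`; if moreover `U` is a direct summand of `R^n`,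
then `W ⊓ U` is a direct summand of `R^n`. -/
theorem stmt2 (R : Type) [CommRing R] [IsDomain R] [IsPrincipalIdealRing R]
    (n : ℕ) (U W : Submodule R (Fin n → R))
    (hW : ∃ C : Submodule R (Fin n → R), IsCompl W C) :
    (∃ C : Submodule R (Fin n → R), C ≤ U ∧ (W ⊓ U) ⊓ C = ⊥ ∧ (W ⊓ U) ⊔ C = U) ∧
    ((∃ C : Submodule R (Fin n → R), IsCompl U C) →
      ∃ C : Submodule R (Fin n → R), IsCompl (W ⊓ U) C) := by
  obtain ⟨D, hWD⟩ := hW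
  -- the projection of `R^n` onto `D` along `W`, restricted to `U`
  let f : U →ₗ[R] (Fin n → R) :=
    D.subtype ∘ₗ (D.projectionOnto W hWD.symm) ∘ₗ U.subtype
  have hkerf : LinearMap.ker f = Submodule.comap U.subtype W := by
    show LinearMap.ker (D.subtype ∘ₗ (D.projectionOnto W hWD.symm) ∘ₗ U.subtype)
      = Submodule.comap U.subtype W
    rw [LinearMap.ker_comp, Submodule.ker_subtype, Submodule.comap_bot, LinearMap.ker_comp,
      Submodule.ker_projectionOnto]
  obtain ⟨C₀, hC₀⟩ := aux_ker_isCompl f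
  rw [hkerf] at hC₀
  refine ⟨⟨C₀.map U.subtype, ?_, ?_, ?_⟩, ?_⟩
  · exact Submodule.map_subtype_le U C₀
  · have : W ⊓ U = Submodule.map U.subtype (Submodule.comap U.subtype W) := by
      rw [Submodule.map_comap_subtype, inf_comm]
    rw [this, ← Submodule.map_inf _ U.injective_subtype, hC₀.inf_eq_bot, Submodule.map_bot]
  · have : W ⊓ U = Submodule.map U.subtype (Submodule.comap U.subtype W) := by
      rw [Submodule.map_comap_subtype, inf_comm]
    rw [this, ← Submodule.map_sup, hC₀.sup_eq_top, Submodule.map_top, Submodule.range_subtype]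
  · rintro ⟨E, hUE⟩
    refine ⟨(C₀.map U.subtype) ⊔ E, ?_, ?_⟩
    · -- disjointness
      rw [disjoint_iff]
      have hCle : C₀.map U.subtype ≤ U := Submodule.map_subtype_le U C₀
      have h1 : (C₀.map U.subtype ⊔ E) ⊓ U = C₀.map U.subtype ⊔ (E ⊓ U) :=
        sup_inf_assoc_of_le E hCle
      have h2 : E ⊓ U = ⊥ := by rw [inf_comm]; exact hUE.inf_eq_bot
      have h3 : (W ⊓ U) ⊓ (C₀.map U.subtype ⊔ E) = (W ⊓ U) ⊓ (C₀.map U.subtype) := by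
        calc (W ⊓ U) ⊓ (C₀.map U.subtype ⊔ E)
            = (W ⊓ U) ⊓ U ⊓ (C₀.map U.subtype ⊔ E) := by
              rw [inf_assoc W U U, inf_idem]
          _ = (W ⊓ U) ⊓ ((C₀.map U.subtype ⊔ E) ⊓ U) := by
              rw [inf_assoc, inf_comm U]
          _ = (W ⊓ U) ⊓ (C₀.map U.subtype ⊔ (E ⊓ U)) := by rw [h1]
          _ = (W ⊓ U) ⊓ (C₀.map U.subtype) := by rw [h2, sup_bot_eq]
      rw [h3]
      have : W ⊓ U = Submodule.map U.subtype (Submodule.comap U.subtype W) := by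
        rw [Submodule.map_comap_subtype, inf_comm]
      rw [this, ← Submodule.map_inf _ U.injective_subtype, hC₀.inf_eq_bot, Submodule.map_bot]
    · -- codisjointness
      rw [codisjoint_iff, ← sup_assoc]
      have : (W ⊓ U) ⊔ C₀.map U.subtype = U := by
        have h : W ⊓ U = Submodule.map U.subtype (Submodule.comap U.subtype W) := by
          rw [Submodule.map_comap_subtype, inf_comm]
        rw [h, ← Submodule.map_sup, hC₀.sup_eq_top, Submodule.map_top, Submodule.range_subtype]
      rw [this, hUE.sup_eq_top]
end

section
/- Let R be a PID and let σ = {U_0, ..., U_p} be a collection of submodules of R^n with the common basis property. Then the closure of σ under finitely iterated sums and intersections also has the common basis property; in particular every submodule obtained from the U_i by iterated sums and intersections is a direct summand of R^n. -/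
/-- A collection of submodules of `R^n` has the common basis property if there
is a basis `b` of `R^n` such that each member is the span of a subset of `b`. -/
def HasCommonBasis (R : Type) [CommRing R] (n : ℕ)
    (σ : Set (Submodule R (Fin n → R))) : Prop :=
  ∃ b : Module.Basis (Fin n) R (Fin n → R),
    ∀ U ∈ σ, ∃ s : Set (Fin n), U = Submodule.span R (b '' s)

/-- The closure of a collection of submodules under (iterated) pairwise sums
and intersections. -/
inductive SumInterClosure (R : Type) [CommRing R] (n : ℕ)
    (σ : Set (Submodule R (Fin n → R))) : Submodule R (Fin n → R) → Prop
  | base {U} : U ∈ σ → SumInterClosure R n σ U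
  | sup {U V} : SumInterClosure R n σ U → SumInterClosure R n σ V →
      SumInterClosure R n σ (U ⊔ V)
  | inf {U V} : SumInterClosure R n σ U → SumInterClosure R n σ V →
      SumInterClosure R n σ (U ⊓ V)

lemma span_image_inf {R M ι : Type*} [CommRing R] [AddCommGroup M] [Module R M]
    (b : Module.Basis ι R M) (s t : Set ι) :
    Submodule.span R (b '' s) ⊓ Submodule.span R (b '' t)
      = Submodule.span R (b '' (s ∩ t)) := by
  ext x
  simp only [Submodule.mem_inf, b.mem_span_image, Set.subset_inter_iff]

lemma span_image_sup {R M ι : Type*} [CommRing R] [AddCommGroup M] [Module R M]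
    (b : Module.Basis ι R M) (s t : Set ι) :
    Submodule.span R (b '' s) ⊔ Submodule.span R (b '' t)
      = Submodule.span R (b '' (s ∪ t)) := by
  rw [Set.image_union, Submodule.span_union]

lemma span_image_isCompl {R M ι : Type*} [CommRing R] [Nontrivial R]
    [AddCommGroup M] [Module R M]
    (b : Module.Basis ι R M) (s : Set ι) :
    IsCompl (Submodule.span R (b '' s)) (Submodule.span R (b '' sᶜ)) := by
  constructor
  · rw [disjoint_iff, span_image_inf, Set.inter_compl_self, Set.image_empty,
      Submodule.span_empty]
  · rw [codisjoint_iff, span_image_sup, Set.union_compl_self, Set.image_univ,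
      b.span_eq]

/-- If a finite collection `σ` of submodules of `R^n` over a PID has the common
basis property, then so does its closure under iterated sums and intersections;
in particular every module obtained from members of `σ` by iterated sums and
intersections is a direct summand of `R^n`. -/
theorem stmt7 (R : Type) [CommRing R] [IsDomain R] [IsPrincipalIdealRing R]
    (n : ℕ) (σ : Set (Submodule R (Fin n → R))) (hfin : σ.Finite)
    (hcb : HasCommonBasis R n σ) :
    HasCommonBasis R n {U | SumInterClosure R n σ U} ∧
    ∀ U, SumInterClosure R n σ U → ∃ C : Submodule R (Fin n → R), IsCompl U C := by
  obtain ⟨b, hb⟩ := hcb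
  have key : ∀ U, SumInterClosure R n σ U →
      ∃ s : Set (Fin n), U = Submodule.span R (b '' s) := by
    intro U hU
    induction hU with
    | base h => exact hb _ h
    | sup _ _ ihU ihV =>
        obtain ⟨s, rfl⟩ := ihU
        obtain ⟨t, rfl⟩ := ihV
        exact ⟨s ∪ t, span_image_sup b s t⟩
    | inf _ _ ihU ihV =>
        obtain ⟨s, rfl⟩ := ihU
        obtain ⟨t, rfl⟩ := ihV
        exact ⟨s ∩ t, span_image_inf b s t⟩
  refine ⟨⟨b, key⟩, fun U hU => ?_⟩
  obtain ⟨s, rfl⟩ := key U hU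
  exact ⟨_, span_image_isCompl b s⟩
end

section
/- Let R be a PID, and let U be a submodule of R^n compatible with a collection σ of split submodules (i.e., σ ∪ {U} has a common basis). Then U is compatible with the closure of σ under sums and intersections, and conversely. -/
/-- Over a PID, a submodule `U` of `R^n` is compatible with a collection `σ` of
split submodules (i.e. `σ ∪ {U}` has a common basis) if and only if it is
compatible with the closure of `σ` under sums and intersections. -/
theorem stmt8 (R : Type) [CommRing R] [IsDomain R] [IsPrincipalIdealRing R]
    (n : ℕ) (σ : Set (Submodule R (Fin n → R))) (U : Submodule R (Fin n → R))
    (hsplit : ∀ W ∈ σ, ∃ C : Submodule R (Fin n → R), IsCompl W C) :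
    HasCommonBasis R n (insert U σ) ↔
      HasCommonBasis R n (insert U {W | SumInterClosure R n σ W}) := by
  constructor
  · rintro ⟨b, hb⟩
    refine ⟨b, ?_⟩
    rintro W (rfl | hW)
    · exact hb W (Set.mem_insert _ _)
    · induction hW with
      | base h => exact hb _ (Set.mem_insert_of_mem _ h)
      | sup h1 h2 ih1 ih2 =>
        obtain ⟨s, rfl⟩ := ih1
        obtain ⟨t, rfl⟩ := ih2
        exact ⟨s ∪ t, span_image_sup b s t⟩
      | inf h1 h2 ih1 ih2 =>
        obtain ⟨s, rfl⟩ := ih1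
        obtain ⟨t, rfl⟩ := ih2
        exact ⟨s ∩ t, span_image_inf b s t⟩
  · rintro ⟨b, hb⟩
    refine ⟨b, ?_⟩
    rintro W (rfl | hW)
    · exact hb W (Set.mem_insert _ _)
    · exact hb W (Set.mem_insert_of_mem _ (SumInterClosure.base hW))
end

section
/- Let F be a field and let U_1, ..., U_k be subspaces of F^n. Write U_S = ∩_{i∈S} U_i with U_∅ = F^n. Then {U_1,...,U_k} has the common basis property if and only if for every S ⊆ [k], dim(Σ_{i∉S} (U_S ∩ U_i)) = Σ_{T ⊋ S} (-1)^{|S|-|T|+1} dim(U_T). -/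
open Module Submodule

section
variable {F V ι : Type*} [Field F] [AddCommGroup V] [Module F V]

lemma aux_span_inf (b : Basis ι F V) (s t : Set ι) :
    span F (b '' s) ⊓ span F (b '' t) = span F (b '' (s ∩ t)) := by
  refine le_antisymm ?_ (le_inf (span_mono (Set.image_mono Set.inter_subset_left))
    (span_mono (Set.image_mono Set.inter_subset_right)))
  have hs : s = (s ∩ t) ∪ (s \ t) := by rw [Set.inter_union_diff]
  nth_rewrite 1 [hs]
  rw [Set.image_union, span_union,
    sup_inf_assoc_of_le _ (span_mono (Set.image_mono Set.inter_subset_right))]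
  have h2 : Disjoint (span F (b '' (s \ t))) (span F (b '' t)) :=
    b.linearIndependent.disjoint_span_image Set.disjoint_sdiff_left
  rw [h2.eq_bot, sup_bot_eq]

lemma aux_finrank_span [Fintype ι] (b : Basis ι F V) (s : Finset ι) :
    finrank F (span F (b '' ↑s)) = s.card := by
  have h : LinearIndependent F (fun x : {x // x ∈ s} => b x) :=
    b.linearIndependent.comp _ Subtype.val_injective
  have := finrank_span_eq_card h
  rwa [show (Set.range fun x : {x // x ∈ s} => b ↑x) = b '' ↑s by
    ext y; simp, Fintype.card_coe] at this
end


-- pure combinatorics for the forward direction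
lemma aux_ie {k m : ℕ} (t : Fin k → Finset (Fin m)) (S : Finset (Fin k)) :
    ((Sᶜ.biUnion (fun i => S.inf t ∩ t i)).card : ℝ) =
      ∑ T ∈ Finset.univ.powerset.filter (fun T => S ⊂ T),
        (-1 : ℝ) ^ (T.card - S.card + 1) * (T.inf t).card := by
  classical
  have h0 := Finset.inclusion_exclusion_card_biUnion Sᶜ (fun i => S.inf t ∩ t i)
  have h1 : ((Sᶜ.biUnion (fun i => S.inf t ∩ t i)).card : ℝ) =
      ∑ q ∈ Sᶜ.powerset.filter (·.Nonempty),
        (-1 : ℝ) ^ (q.card + 1) * (q.inf (fun i => S.inf t ∩ t i)).card := by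
    have := congrArg (fun z : ℤ => (z : ℝ)) h0
    push_cast at this
    rw [this]
    rw [← Finset.sum_coe_sort (Sᶜ.powerset.filter (·.Nonempty))
      (fun q => (-1 : ℝ) ^ (q.card + 1) * (q.inf (fun i => S.inf t ∩ t i)).card)]
    refine Finset.sum_congr rfl fun q _ => ?_
    rw [Finset.inf'_eq_inf]
  rw [h1]
  refine Finset.sum_nbij' (fun q => S ∪ q) (fun T => T \ S) ?_ ?_ ?_ ?_ ?_
  · intro q hq
    simp only [Finset.mem_filter, Finset.mem_powerset] at hq ⊢
    obtain ⟨hq1, hq2⟩ := hq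
    refine ⟨Finset.subset_univ _, ?_⟩
    rw [Finset.ssubset_iff_of_subset Finset.subset_union_left]
    obtain ⟨x, hx⟩ := hq2
    exact ⟨x, Finset.mem_union_right _ hx, fun hxS => by
      have := hq1 hx; simp at this; exact this hxS⟩
  · intro T hT
    simp only [Finset.mem_filter, Finset.mem_powerset] at hT ⊢
    obtain ⟨-, hT2⟩ := hT
    constructor
    · intro x hx; simp at hx ⊢; exact hx.2
    · obtain ⟨x, hxT, hxS⟩ := Finset.exists_of_ssubset hT2
      exact ⟨x, Finset.mem_sdiff.2 ⟨hxT, hxS⟩⟩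
  · intro q hq
    simp only [Finset.mem_filter, Finset.mem_powerset] at hq
    have hdisj : Disjoint S q := by
      rw [Finset.disjoint_left]; intro x hxS hxq
      have := hq.1 hxq; simp at this; exact this hxS
    exact Finset.union_sdiff_cancel_left hdisj
  · intro T hT
    simp only [Finset.mem_filter, Finset.mem_powerset] at hT
    exact Finset.union_sdiff_of_subset hT.2.subset
  · intro q hq
    simp only [Finset.mem_filter, Finset.mem_powerset] at hq
    obtain ⟨hq1, hq2⟩ := hq
    have hdisj : Disjoint S q := by
      rw [Finset.disjoint_left]; intro x hxS hxq
      have := hq1 hxq; simp at this; exact this hxS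
    have hcard : (S ∪ q).card - S.card = q.card := by
      rw [Finset.card_union_of_disjoint hdisj]; omega
    rw [hcard, Finset.inf_union]
    congr 2
    have : (fun i => S.inf t ∩ t i) = (fun _ => S.inf t) ⊓ t := rfl
    rw [this, Finset.inf_inf, Finset.inf_const hq2]



theorem fwd (F : Type) [Field F] (n k : ℕ) (U : Fin k → Submodule F (Fin n → F))
    (b : Basis (Fin n) F (Fin n → F)) (t : Fin k → Finset (Fin n))
    (hU : ∀ i, U i = span F (b '' ↑(t i))) (S : Finset (Fin k)) :
    (finrank F ↥(⨆ i ∈ Sᶜ, ((⨅ j ∈ S, U j) ⊓ U i)) : ℝ) =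
        ∑ T ∈ Finset.univ.powerset.filter (fun T => S ⊂ T),
          (-1 : ℝ) ^ (T.card - S.card + 1) * finrank F ↥(⨅ j ∈ T, U j) := by
  classical
  -- infima are spans of finset infs
  have key : ∀ T : Finset (Fin k), (⨅ j ∈ T, U j) = span F (b '' ↑(T.inf t)) := by
    intro T
    induction T using Finset.induction_on with
    | empty => simp [b.span_eq]
    | insert _ _ hx ih =>
        rename_i a T'
        rw [Finset.iInf_insert, hU, ih, aux_span_inf, Finset.inf_insert]
        simp
  -- the big sup is a span
  have key2 : (⨆ i ∈ Sᶜ, ((⨅ j ∈ S, U j) ⊓ U i)) =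
      span F (b '' ↑(Sᶜ.biUnion (fun i => S.inf t ∩ t i))) := by
    rw [Finset.coe_biUnion, Set.image_iUnion₂, span_iUnion₂]
    refine iSup_congr fun i => iSup_congr fun hi => ?_
    rw [key, hU, aux_span_inf, Finset.coe_inter]
  rw [key2, aux_finrank_span]
  rw [show (∑ T ∈ Finset.univ.powerset.filter (fun T => S ⊂ T),
          (-1 : ℝ) ^ (T.card - S.card + 1) * finrank F ↥(⨅ j ∈ T, U j)) =
      ∑ T ∈ Finset.univ.powerset.filter (fun T => S ⊂ T),
          (-1 : ℝ) ^ (T.card - S.card + 1) * (T.inf t).card from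
    Finset.sum_congr rfl fun T _ => by rw [key, aux_finrank_span]]
  exact aux_ie t S


lemma aux_compl {F V : Type*} [Field F] [AddCommGroup V] [Module F V]
    (W D : Submodule F V) (hDW : D ≤ W) :
    ∃ C : Submodule F V, C ≤ W ∧ C ⊓ D = ⊥ ∧ C ⊔ D = W := by
  obtain ⟨C', hC'⟩ := Submodule.exists_isCompl (D.comap W.subtype)
  have hD : (D.comap W.subtype).map W.subtype = D := by
    rw [Submodule.map_comap_subtype, inf_eq_right.2 hDW]
  refine ⟨C'.map W.subtype, Submodule.map_subtype_le _ _, ?_, ?_⟩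
  · rw [← hD, ← Submodule.map_inf _ (Submodule.injective_subtype W),
      hC'.symm.inf_eq_bot, Submodule.map_bot]
  · rw [← hD, ← Submodule.map_sup, hC'.symm.sup_eq_top, Submodule.map_subtype_top]

theorem bwd (F : Type) [Field F] (n k : ℕ) (U : Fin k → Submodule F (Fin n → F))
    (h : ∀ S : Finset (Fin k),
      (finrank F ↥(⨆ i ∈ Sᶜ, ((⨅ j ∈ S, U j) ⊓ U i)) : ℝ) =
        ∑ T ∈ Finset.univ.powerset.filter (fun T => S ⊂ T),
          (-1 : ℝ) ^ (T.card - S.card + 1) * finrank F ↥(⨅ j ∈ T, U j)) :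
    ∃ b : Basis (Fin n) F (Fin n → F),
      ∀ i : Fin k, ∃ s : Set (Fin n), U i = Submodule.span F (b '' s) := by
  classical
  set US : Finset (Fin k) → Submodule F (Fin n → F) := fun S => ⨅ j ∈ S, U j with hUSdef
  set DS : Finset (Fin k) → Submodule F (Fin n → F) :=
    fun S => ⨆ i ∈ Sᶜ, (US S ⊓ U i) with hDSdef
  have hDle : ∀ S, DS S ≤ US S := fun S => iSup₂_le fun i _ => inf_le_left
  choose C hCle hCinf hCsup using fun S => aux_compl (US S) (DS S) (hDle S)
  have hins : ∀ (S : Finset (Fin k)), ∀ i, US S ⊓ U i = US (insert i S) := by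
    intro S i
    rw [hUSdef]
    simp only [Finset.iInf_insert]
    rw [inf_comm]
  -- structural lemma
  have main : ∀ m : ℕ, ∀ S : Finset (Fin k), Sᶜ.card ≤ m →
      US S = ⨆ T ∈ Finset.univ.filter (fun T => S ⊆ T), C T := by
    intro m
    induction m using Nat.strong_induction_on with
    | _ m ih =>
      intro S hS
      have hD : DS S = ⨆ T ∈ Finset.univ.filter (fun T => S ⊂ T), C T := by
        apply le_antisymm
        · refine iSup₂_le fun i hi => ?_
          have hiS : i ∉ S := by simpa using hi
          have hcard : (insert i S)ᶜ.card < Sᶜ.card := by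
            rw [Finset.compl_insert]
            exact Finset.card_erase_lt_of_mem (by simpa using hiS)
          rw [hins S i, ih ((insert i S)ᶜ.card) (by omega) (insert i S) le_rfl]
          refine iSup₂_le fun T hT => ?_
          simp only [Finset.mem_filter, Finset.mem_univ, true_and] at hT
          refine le_iSup₂_of_le T ?_ le_rfl
          simp only [Finset.mem_filter, Finset.mem_univ, true_and]
          exact lt_of_lt_of_le (Finset.ssubset_insert hiS) hT
        · refine iSup₂_le fun T hT => ?_
          simp only [Finset.mem_filter, Finset.mem_univ, true_and] at hT
          obtain ⟨i, hiT, hiS⟩ := Finset.exists_of_ssubset hT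
          have h1 : C T ≤ US T := le_trans le_sup_left (le_of_eq (hCsup T))
          have h2 : US T ≤ US S ⊓ U i := by
            refine le_inf (le_iInf₂ fun j hj => iInf₂_le j (hT.subset hj)) (iInf₂_le i hiT)
          exact le_trans h1 (le_trans h2 (le_iSup₂_of_le i (by simpa using hiS) le_rfl))
      have hsplit : Finset.univ.filter (fun T => S ⊆ T) =
          insert S (Finset.univ.filter (fun T => S ⊂ T)) := by
        ext T
        simp only [Finset.mem_filter, Finset.mem_univ, true_and, Finset.mem_insert]
        exact ⟨fun hST => (eq_or_ne T S).imp id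
            (fun hne => Finset.ssubset_iff_subset_ne.2 ⟨hST, Ne.symm hne⟩),
          fun hh => hh.elim (fun e => e ▸ Finset.Subset.refl T) (fun hlt => hlt.subset)⟩
      rw [hsplit, Finset.iSup_insert, ← hD, hCsup S]
  have hsplit : ∀ S : Finset (Fin k), Finset.univ.filter (fun T => S ⊆ T) =
      insert S (Finset.univ.filter (fun T => S ⊂ T)) := by
    intro S
    ext T
    simp only [Finset.mem_filter, Finset.mem_univ, true_and, Finset.mem_insert]
    exact ⟨fun hST => (eq_or_ne T S).imp id
        (fun hne => Finset.ssubset_iff_subset_ne.2 ⟨hST, Ne.symm hne⟩),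
      fun hh => hh.elim (fun e => e ▸ Finset.Subset.refl T) (fun hlt => hlt.subset)⟩
  -- rank of the complements
  have hrank : ∀ S : Finset (Fin k), (finrank F (C S) : ℝ) =
      ∑ T ∈ Finset.univ.filter (fun T => S ⊆ T),
        (-1:ℝ)^(T.card - S.card) * finrank F (US T) := by
    intro S
    have h2 := Submodule.finrank_sup_add_finrank_inf_eq (C S) (DS S)
    rw [hCsup S, hCinf S, finrank_bot, add_zero] at h2
    have h3 : (finrank F (DS S) : ℝ) =
        ∑ T ∈ Finset.univ.powerset.filter (fun T => S ⊂ T),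
          (-1 : ℝ) ^ (T.card - S.card + 1) * finrank F (US T) := h S
    rw [Finset.powerset_univ] at h3
    have hcast : (finrank F (C S) : ℝ) = (finrank F (US S) : ℝ) - finrank F (DS S) := by
      have : (finrank F (US S) : ℝ) = finrank F (C S) + finrank F (DS S) := by
        exact_mod_cast congrArg (fun z : ℕ => (z : ℝ)) h2
      linarith
    have hnm : S ∉ Finset.univ.filter (fun T => S ⊂ T) := by
      simp only [Finset.mem_filter, Finset.mem_univ, true_and]
      exact fun hh => (Finset.ssubset_iff_subset_ne.1 hh).2 rfl
    rw [hcast, h3, hsplit S, Finset.sum_insert hnm, Nat.sub_self, pow_zero, one_mul,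
      sub_eq_add_neg, ← Finset.sum_neg_distrib]
    congr 1
    refine Finset.sum_congr rfl fun T hT => ?_
    rw [pow_succ]
    ring
  -- total dimension count
  have hsum : ∑ S : Finset (Fin k), finrank F (C S) = n := by
    have hr : (∑ S : Finset (Fin k), (finrank F (C S):ℝ)) = n := by
      rw [Finset.sum_congr rfl fun S _ => hrank S]
      rw [Finset.sum_comm' (s := (Finset.univ : Finset (Finset (Fin k))))
        (t := fun S : Finset (Fin k) => Finset.univ.filter (fun T => S ⊆ T))
        (s' := fun T : Finset (Fin k) => Finset.univ.filter (fun S => S ⊆ T)) (t' := Finset.univ)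
        (by intro S T; simp)]
      have inner : ∀ T : Finset (Fin k), (∑ S ∈ Finset.univ.filter (fun S => S ⊆ T),
          (-1:ℝ)^(T.card - S.card) * finrank F (US T)) =
          (if T = ∅ then (finrank F (US T) : ℝ) else 0) := by
        intro T
        have hps : Finset.univ.filter (fun S => S ⊆ T) = T.powerset := by
          ext S; simp
        rw [hps, ← Finset.sum_mul]
        have hterm : ∀ S ∈ T.powerset, (-1:ℝ)^(T.card - S.card) =
            (-1:ℝ)^T.card * (-1:ℝ)^S.card := by
          intro S hS
          have hle : S.card ≤ T.card := Finset.card_le_card (Finset.mem_powerset.1 hS)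
          have h1 : ((-1:ℝ))^S.card * (-1:ℝ)^S.card = 1 := by
            rw [← pow_add]
            exact Even.neg_one_pow ⟨S.card, rfl⟩
          calc ((-1:ℝ))^(T.card - S.card) = (-1:ℝ)^(T.card - S.card) *
                ((-1:ℝ)^S.card * (-1:ℝ)^S.card) := by rw [h1, mul_one]
            _ = ((-1:ℝ)^(T.card - S.card) * (-1:ℝ)^S.card) * (-1:ℝ)^S.card := by ring
            _ = (-1:ℝ)^T.card * (-1:ℝ)^S.card := by
                rw [← pow_add, Nat.sub_add_cancel hle]
        rw [Finset.sum_congr rfl hterm, ← Finset.mul_sum]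
        have hz := Finset.sum_powerset_neg_one_pow_card (x := T)
        have hzr : (∑ S ∈ T.powerset, (-1:ℝ)^S.card) = if T = ∅ then 1 else 0 := by
          have := congrArg (fun z : ℤ => (z:ℝ)) hz
          push_cast at this
          rw [this]
        rw [hzr]
        by_cases hT : T = ∅
        · simp [hT]
        · simp [hT]
      rw [Finset.sum_congr rfl fun T _ => inner T, Finset.sum_ite_eq' Finset.univ ∅
        (fun T => (finrank F (US T) : ℝ))]
      have hUStop : US ∅ = ⊤ := by simp [hUSdef]
      have htop : finrank F (⊤ : Submodule F (Fin n → F)) = n := by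
        rw [finrank_top, Module.finrank_fin_fun]
      simp only [Finset.mem_univ, if_pos]
      rw [hUStop, htop]
    exact_mod_cast hr
  -- build the common basis from bases of the complements
  let d : Finset (Fin k) → ℕ := fun S => finrank F (C S)
  let bS : ∀ S, Basis (Fin (d S)) F (C S) := fun S => Module.finBasis F (C S)
  let v : (Σ S : Finset (Fin k), Fin (d S)) → (Fin n → F) := fun p => ((bS p.1) p.2 : Fin n → F)
  have hcard : Fintype.card (Σ S : Finset (Fin k), Fin (d S)) = n := by
    simp only [Fintype.card_sigma, Fintype.card_fin]
    exact hsum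
  let e : Fin n ≃ (Σ S : Finset (Fin k), Fin (d S)) :=
    Fintype.equivOfCardEq (by rw [hcard, Fintype.card_fin])
  have hspanS : ∀ S, span F (Set.range fun j : Fin (d S) => v ⟨S, j⟩) = C S := by
    intro S
    have hr : (Set.range fun j : Fin (d S) => v ⟨S, j⟩) =
        (C S).subtype '' (Set.range (bS S)) := by
      rw [← Set.range_comp]; rfl
    rw [hr, Submodule.span_image, (bS S).span_eq, Submodule.map_subtype_top]
  have hmainall : ∀ S : Finset (Fin k), US S =
      ⨆ T ∈ Finset.univ.filter (fun T => S ⊆ T), C T :=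
    fun S => main k S (by simpa using Finset.card_le_univ Sᶜ)
  have hspan : ⊤ ≤ span F (Set.range (v ∘ e)) := by
    have hre : Set.range (v ∘ e) = Set.range v := e.surjective.range_comp v
    rw [hre, Set.range_sigma_eq_iUnion_range, span_iUnion]
    have h0 := hmainall ∅
    have hUStop : US ∅ = ⊤ := by simp [hUSdef]
    rw [hUStop] at h0
    rw [h0]
    refine iSup₂_le fun T _ => ?_
    rw [← hspanS T]
    exact le_iSup (fun S => span F (Set.range fun j : Fin (d S) => v ⟨S, j⟩)) T
  let b : Basis (Fin n) F (Fin n → F) := basisOfTopLeSpanOfCardEqFinrank (v ∘ e) hspan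
    (by rw [Fintype.card_fin, Module.finrank_fin_fun])
  refine ⟨b, fun i => ⟨{x | i ∈ (e x).1}, ?_⟩⟩
  have hb : ⇑b = v ∘ e := coe_basisOfTopLeSpanOfCardEqFinrank _ _ _
  rw [hb]
  have himg : (v ∘ e) '' {x | i ∈ (e x).1} = v '' {p : Σ S : Finset (Fin k), Fin (d S) | i ∈ p.1} := by
    rw [Set.image_comp,
      show {x | i ∈ (e x).1} = ⇑e ⁻¹' {p : Σ S : Finset (Fin k), Fin (d S) | i ∈ p.1} from rfl,
      Set.image_preimage_eq _ e.surjective]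
  rw [himg]
  have hset : v '' {p : Σ S : Finset (Fin k), Fin (d S) | i ∈ p.1} =
      ⋃ S : Finset (Fin k), ⋃ (_ : i ∈ S), Set.range (fun j : Fin (d S) => v ⟨S, j⟩) := by
    ext y
    simp only [Set.mem_image, Set.mem_iUnion, Set.mem_range, Set.mem_setOf_eq]
    constructor
    · rintro ⟨⟨S, j⟩, hi, rfl⟩; exact ⟨S, hi, j, rfl⟩
    · rintro ⟨S, hi, j, rfl⟩; exact ⟨⟨S, j⟩, hi, rfl⟩
  rw [hset, span_iUnion₂]
  have hUi : U i = US {i} := by simp [hUSdef]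
  rw [hUi, hmainall {i}]
  apply le_antisymm
  · refine iSup₂_le fun T hT => ?_
    simp only [Finset.mem_filter, Finset.mem_univ, true_and, Finset.singleton_subset_iff] at hT
    rw [← hspanS T] at *
    exact le_iSup₂_of_le T hT le_rfl
  · refine iSup₂_le fun T hT => ?_
    rw [hspanS T]
    exact le_iSup₂_of_le T (by simpa using hT) le_rfl


/-- For subspaces `U_1, ..., U_k` of `F^n` over a field `F` (with
`U_S = ⋂_{i ∈ S} U_i`, `U_∅ = F^n`), the collection has the common basis
property if and only if for every `S ⊆ [k]` the inclusion-exclusion formula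
`dim (∑_{i ∉ S} (U_S ∩ U_i)) = ∑_{T ⊋ S} (-1)^{|S|-|T|+1} dim U_T` holds. -/
theorem stmt12 (F : Type) [Field F] (n k : ℕ)
    (U : Fin k → Submodule F (Fin n → F)) :
    (∃ b : Basis (Fin n) F (Fin n → F),
      ∀ i : Fin k, ∃ s : Set (Fin n), U i = Submodule.span F (b '' s)) ↔
    (∀ S : Finset (Fin k),
      (finrank F ↥(⨆ i ∈ Sᶜ, ((⨅ j ∈ S, U j) ⊓ U i)) : ℝ) =
        ∑ T ∈ Finset.univ.powerset.filter (fun T => S ⊂ T),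
          (-1 : ℝ) ^ (T.card - S.card + 1) * finrank F ↥(⨅ j ∈ T, U j)) := by
  constructor
  · rintro ⟨b, hb⟩
    choose s hs using hb
    intro S
    refine fwd F n k U b (fun i => (Set.toFinite (s i)).toFinset) (fun i => ?_) S
    rw [Set.Finite.coe_toFinset]
    exact hs i
  · exact bwd F n k U
end

section
/- Let F be a field and let M be a finite-dimensional F-vector space. Given any two flags of subspaces of M (chains of subspaces under inclusion), there is a basis of M such that every subspace appearing in either flag is the span of a subset of that basis. Equivalently, the union of any two flags has the common basis property. -/
/-- Let `F` be a field and `M` a finite-dimensional `F`-vector space. Any two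
flags of subspaces of `M` admit a common basis: there is a basis of `M` such
that every subspace appearing in either flag is the span of a subset of it. -/
theorem stmt17 (F : Type) [Field F] (M : Type) [AddCommGroup M] [Module F M]
    [FiniteDimensional F M] (a b : ℕ)
    (V : Fin a → Submodule F M) (hV : Monotone V)
    (W : Fin b → Submodule F M) (hW : Monotone W) :
    ∃ B : Module.Basis (Fin (Module.finrank F M)) F M,
      (∀ i : Fin a, ∃ s : Set (Fin (Module.finrank F M)),
        V i = Submodule.span F (B '' s)) ∧
      (∀ j : Fin b, ∃ s : Set (Fin (Module.finrank F M)),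
        W j = Submodule.span F (B '' s)) := by
  classical
  -- extended flags
  let V' : ℕ → Submodule F M := fun k =>
    if h0 : k = 0 then ⊥ else if h : k ≤ a then V ⟨k - 1, by omega⟩ else ⊤
  let W' : ℕ → Submodule F M := fun k =>
    if h0 : k = 0 then ⊥ else if h : k ≤ b then W ⟨k - 1, by omega⟩ else ⊤
  have hV'mono : Monotone V' := by
    apply monotone_nat_of_le_succ
    intro k
    by_cases h0 : k = 0
    · simp [V', h0]
    simp only [V']
    rw [dif_neg h0, dif_neg (by omega : ¬ k + 1 = 0)]
    by_cases h1 : k + 1 ≤ a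
    · rw [dif_pos (by omega : k ≤ a), dif_pos h1]
      exact hV (by simp only [Fin.mk_le_mk]; omega)
    by_cases h2 : k ≤ a
    · rw [dif_pos h2, dif_neg h1]; exact le_top
    · rw [dif_neg h2, dif_neg h1]
  have hW'mono : Monotone W' := by
    apply monotone_nat_of_le_succ
    intro k
    by_cases h0 : k = 0
    · simp [W', h0]
    simp only [W']
    rw [dif_neg h0, dif_neg (by omega : ¬ k + 1 = 0)]
    by_cases h1 : k + 1 ≤ b
    · rw [dif_pos (by omega : k ≤ b), dif_pos h1]
      exact hW (by simp only [Fin.mk_le_mk]; omega)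
    by_cases h2 : k ≤ b
    · rw [dif_pos h2, dif_neg h1]; exact le_top
    · rw [dif_neg h2, dif_neg h1]
  have hV'0 : V' 0 = ⊥ := by simp [V']
  have hW'0 : W' 0 = ⊥ := by simp [W']
  have hV'succ : ∀ i : Fin a, V' ((i : ℕ) + 1) = V i := by
    intro i
    show (if h0 : (i : ℕ) + 1 = 0 then ⊥ else if h : (i : ℕ) + 1 ≤ a then V ⟨(i:ℕ)+1-1, by omega⟩ else ⊤) = V i
    rw [dif_neg (by omega), dif_pos (by omega : (i:ℕ)+1 ≤ a)]
    congr 1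
  have hW'succ : ∀ j : Fin b, W' ((j : ℕ) + 1) = W j := by
    intro j
    show (if h0 : (j : ℕ) + 1 = 0 then ⊥ else if h : (j : ℕ) + 1 ≤ b then W ⟨(j:ℕ)+1-1, by omega⟩ else ⊤) = W j
    rw [dif_neg (by omega), dif_pos (by omega : (j:ℕ)+1 ≤ b)]
    congr 1
  have hV'top : ∀ k, a < k → V' k = ⊤ := by
    intro k hk
    show (if h0 : k = 0 then ⊥ else if h : k ≤ a then V ⟨k-1, by omega⟩ else ⊤) = ⊤
    rw [dif_neg (by omega : ¬ k = 0), dif_neg (by omega : ¬ k ≤ a)]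
  have hW'top : ∀ k, b < k → W' k = ⊤ := by
    intro k hk
    show (if h0 : k = 0 then ⊥ else if h : k ≤ b then W ⟨k-1, by omega⟩ else ⊤) = ⊤
    rw [dif_neg (by omega : ¬ k = 0), dif_neg (by omega : ¬ k ≤ b)]
  -- grid of complements
  let D : ℕ → ℕ → Submodule F M := fun i j => (V' i ⊓ W' (j+1)) ⊔ (V' (i+1) ⊓ W' j)
  let E : ℕ → ℕ → Submodule F M := fun i j => V' (i+1) ⊓ W' (j+1)
  have hDE : ∀ i j, D i j ≤ E i j := fun i j =>
    sup_le (inf_le_inf_right _ (hV'mono (Nat.le_succ i)))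
      (inf_le_inf_left _ (hW'mono (Nat.le_succ j)))
  have hCex : ∀ i j, ∃ Cij : Submodule F M,
      Cij ≤ E i j ∧ D i j ⊓ Cij = ⊥ ∧ D i j ⊔ Cij = E i j := by
    intro i j
    obtain ⟨K0, hK0⟩ := Submodule.exists_isCompl (D i j)
    refine ⟨K0 ⊓ E i j, inf_le_right, ?_, ?_⟩
    · rw [eq_bot_iff, ← hK0.inf_eq_bot]
      exact inf_le_inf_left _ inf_le_left
    · rw [← sup_inf_assoc_of_le _ (hDE i j), hK0.sup_eq_top, top_inf_eq]
  choose C hCle hCdisj hCsup using hCex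
  have hCleW : ∀ i j, C i j ≤ W' (j+1) := fun i j => (hCle i j).trans inf_le_right
  -- the key modularity computation: E i j ⊓ (V' i ⊔ (V' (i+1) ⊓ W' j)) = D i j
  have hEmod : ∀ i j, E i j ⊓ (V' i ⊔ (V' (i+1) ⊓ W' j)) = D i j := by
    intro i j
    have hz : V' (i+1) ⊓ W' j ≤ E i j := inf_le_inf_left _ (hW'mono (Nat.le_succ j))
    rw [← inf_sup_assoc_of_le _ hz]
    have hE : E i j ⊓ V' i = V' i ⊓ W' (j+1) := by
      apply le_antisymm
      · exact le_inf inf_le_right (inf_le_left.trans inf_le_right)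
      · exact le_inf (le_inf (inf_le_left.trans (hV'mono (Nat.le_succ i))) inf_le_right)
          inf_le_left
    rw [hE]
  -- sup absorption: V' i ⊔ D i j = V' i ⊔ (V' (i+1) ⊓ W' j)
  have hVD : ∀ i j, V' i ⊔ D i j = V' i ⊔ (V' (i+1) ⊓ W' j) := by
    intro i j
    show V' i ⊔ ((V' i ⊓ W' (j+1)) ⊔ (V' (i+1) ⊓ W' j)) = _
    rw [← sup_assoc, sup_eq_left.2 (inf_le_left : V' i ⊓ W' (j+1) ≤ V' i)]
  -- the W-side recursion
  have hA' : ∀ j i, V' i ⊓ W' (j+1)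
      = (V' i ⊓ W' j) ⊔ (Finset.range i).sup (fun i' => C i' j) := by
    intro j i
    induction i with
    | zero => simp [hV'0]
    | succ i ih =>
      have h1 : V' (i+1) ⊓ W' (j+1) = D i j ⊔ C i j := (hCsup i j).symm
      rw [h1]
      show ((V' i ⊓ W' (j+1)) ⊔ (V' (i+1) ⊓ W' j)) ⊔ C i j = _
      rw [ih, Finset.range_add_one, Finset.sup_insert]
      have habs : V' i ⊓ W' j ≤ V' (i+1) ⊓ W' j :=
        inf_le_inf_right _ (hV'mono (Nat.le_succ i))
      apply le_antisymm
      · exact sup_le (sup_le (sup_le (habs.trans le_sup_left)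
          (le_sup_right.trans le_sup_right)) le_sup_left)
          (le_sup_left.trans le_sup_right)
      · exact sup_le (le_sup_right.trans le_sup_left)
          (sup_le le_sup_right ((le_sup_right.trans le_sup_left).trans le_sup_left))
  have hWstep : ∀ j, W' (j+1) = W' j ⊔ (Finset.range (a+1)).sup (fun i' => C i' j) := by
    intro j
    have := hA' j (a+1)
    rwa [hV'top (a+1) (by omega), top_inf_eq, top_inf_eq] at this
  -- flattened filtration
  let bb := b + 1
  have hbb : 0 < bb := Nat.succ_pos b
  have hbbdef : bb = b + 1 := rfl
  let K := (a + 1) * bb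
  let T : ℕ → Submodule F M := fun k => V' (k / bb) ⊔ (V' (k / bb + 1) ⊓ W' (k % bb))
  let Cf : ℕ → Submodule F M := fun k => C (k / bb) (k % bb)
  have hT0 : T 0 = ⊥ := by
    simp only [T, Nat.zero_div, Nat.zero_mod, hV'0, hW'0, inf_bot_eq, sup_bot_eq]
  have hTmul : ∀ m, T (m * bb) = V' m := by
    intro m
    simp only [T, Nat.mul_div_cancel m hbb, Nat.mul_mod_left, hW'0, inf_bot_eq, sup_bot_eq]
  have hkey : ∀ k, T k ⊔ Cf k = V' (k / bb) ⊔ E (k / bb) (k % bb) := by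
    intro k
    show (V' (k / bb) ⊔ (V' (k / bb + 1) ⊓ W' (k % bb))) ⊔ C (k / bb) (k % bb) = _
    rw [← hVD (k / bb) (k % bb), sup_assoc, hCsup]
  have hTstep : ∀ k, T k ⊔ Cf k = T (k + 1) := by
    intro k
    have hk := Nat.div_add_mod k bb
    have hj : k % bb < bb := Nat.mod_lt _ hbb
    rw [hkey]
    by_cases hjb : k % bb < b
    · have hd : (k + 1) / bb = k / bb := by
        rw [show k + 1 = bb * (k / bb) + (k % bb + 1) by omega, Nat.mul_add_div hbb,
          show (k % bb + 1) / bb = 0 from Nat.div_eq_of_lt (by omega), Nat.add_zero]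
      have hm : (k + 1) % bb = k % bb + 1 := by
        rw [show k + 1 = bb * (k / bb) + (k % bb + 1) by omega, Nat.mul_add_mod,
          Nat.mod_eq_of_lt (by omega)]
      show _ = V' ((k+1) / bb) ⊔ (V' ((k+1) / bb + 1) ⊓ W' ((k+1) % bb))
      rw [hd, hm]
    · have hjb' : k % bb = b := by omega
      have hk1 : k + 1 = (k / bb + 1) * bb := by
        rw [add_mul, one_mul, mul_comm]; omega
      have hd : (k + 1) / bb = k / bb + 1 := by rw [hk1, Nat.mul_div_cancel _ hbb]
      have hm : (k + 1) % bb = 0 := by rw [hk1, Nat.mul_mod_left]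
      show _ = V' ((k+1) / bb) ⊔ (V' ((k+1) / bb + 1) ⊓ W' ((k+1) % bb))
      rw [hd, hm, hW'0, inf_bot_eq, sup_bot_eq]
      show V' (k / bb) ⊔ (V' (k / bb + 1) ⊓ W' (k % bb + 1)) = _
      rw [hjb', hW'top (b + 1) (by omega), inf_top_eq,
        sup_eq_right.2 (hV'mono (Nat.le_succ _))]
  have hTdisj : ∀ k, T k ⊓ Cf k = ⊥ := by
    intro k
    apply eq_bot_iff.2
    have h1 : T k ⊓ Cf k ≤ D (k / bb) (k % bb) := by
      have h2 : T k ⊓ Cf k ≤ E (k / bb) (k % bb) ⊓ (V' (k / bb) ⊔ (V' (k / bb + 1) ⊓ W' (k % bb))) :=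
        le_inf (inf_le_right.trans (hCle _ _)) inf_le_left
      rw [hEmod] at h2
      exact h2
    exact (le_inf h1 inf_le_right).trans (hCdisj _ _).le
  have hTK : T K = ⊤ := by
    show T ((a + 1) * bb) = ⊤
    rw [hTmul, hV'top _ (by omega)]
  -- choose linearly independent spanning sets for each grid complement
  have huex : ∀ k, ∃ t : Set M, t ⊆ (Cf k : Set M) ∧ Submodule.span F t = Cf k ∧
      LinearIndependent F (fun x : t => (x : M)) := by
    intro k
    obtain ⟨t, ht1, ht2, ht3⟩ := exists_linearIndependent F ((Cf k : Set M))
    exact ⟨t, ht1, by rw [ht2, Submodule.span_eq], ht3⟩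
  choose u hu1 hu2 hu3 using huex
  let Uk : ℕ → Set M := fun m => ⋃ k ∈ Finset.range m, u k
  have hUkstep : ∀ m, Uk (m + 1) = u m ∪ Uk m := by
    intro m
    simp only [Uk, Finset.range_add_one, Finset.set_biUnion_insert]
  have hUkmono : Monotone Uk := by
    intro m m' h
    refine Set.iUnion₂_subset fun k hk => Set.subset_iUnion₂ (s := fun k _ => u k) k ?_
    exact Finset.mem_range.2 (lt_of_lt_of_le (Finset.mem_range.1 hk) h)
  have hUk : ∀ m, Submodule.span F (Uk m) = T m ∧
      LinearIndependent F (fun x : Uk m => (x : M)) := by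
    intro m
    induction m with
    | zero =>
      have he : Uk 0 = ∅ := by simp [Uk]
      constructor
      · rw [he, Submodule.span_empty, hT0]
      · rw [he]
        exact linearIndependent_empty F M
    | succ m ih =>
      have hspan : Submodule.span F (Uk (m + 1)) = T (m + 1) := by
        rw [hUkstep, Submodule.span_union, hu2, ih.1, ← hTstep m, sup_comm]
      refine ⟨hspan, ?_⟩
      rw [hUkstep]
      refine LinearIndepOn.id_union (hu3 m) ih.2 ?_
      rw [hu2, ih.1, disjoint_iff, inf_comm, hTdisj m]
  -- assemble the basis
  have hspanK : Submodule.span F (Uk K) = ⊤ := (hUk K).1.trans hTK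
  let b0 : Module.Basis (Uk K) F M := Module.Basis.mk (hUk K).2
    (by rw [Subtype.range_coe, hspanK])
  haveI : Fintype (Uk K) := FiniteDimensional.fintypeBasisIndex b0
  have hcard : Module.finrank F M = Fintype.card (Uk K) := Module.finrank_eq_card_basis b0
  let e : (Uk K) ≃ Fin (Module.finrank F M) := Fintype.equivFinOfCardEq hcard.symm
  let B := b0.reindex e
  have hB : ∀ s : Set M, s ⊆ Uk K → ∃ t : Set (Fin (Module.finrank F M)),
      Submodule.span F s = Submodule.span F (B '' t) := by
    intro s hs
    refine ⟨e '' (Subtype.val ⁻¹' s), ?_⟩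
    have hfun : (fun x : Uk K => B (e x)) = fun x : Uk K => (x : M) := by
      funext x
      show (b0.reindex e) (e x) = (x : M)
      rw [Module.Basis.reindex_apply, Equiv.symm_apply_apply, Module.Basis.mk_apply]
    have himg : B '' (e '' (Subtype.val ⁻¹' s)) = s := by
      rw [← Set.image_comp]
      have : (B ∘ e) = (Subtype.val : Uk K → M) := funext fun x => congrFun hfun x
      rw [this, Subtype.image_preimage_coe, Set.inter_eq_self_of_subset_right hs]
    rw [himg]
  -- the W-side union sets
  let Ws : ℕ → Set M := fun j' => ⋃ k ∈ (Finset.range K).filter (fun k => k % bb < j'), u k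
  have hWsub : ∀ j', Ws j' ⊆ Uk K := by
    intro j'
    refine Set.iUnion₂_subset fun k hk => Set.subset_iUnion₂ (s := fun k _ => u k) k ?_
    exact Finset.mem_of_mem_filter k hk
  have hWspan : ∀ j', j' ≤ bb → Submodule.span F (Ws j') = W' j' := by
    have hge : ∀ j', j' ≤ bb → W' j' ≤ Submodule.span F (Ws j') := by
      intro j'
      induction j' with
      | zero => intro _; rw [hW'0]; exact bot_le
      | succ j ihj =>
        intro hj'
        have hWm : Ws j ⊆ Ws (j + 1) := by
          refine Set.iUnion₂_subset fun k hk => Set.subset_iUnion₂ (s := fun k _ => u k) k ?_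
          rw [Finset.mem_filter] at hk ⊢
          exact ⟨hk.1, by omega⟩
        rw [hWstep j]
        refine sup_le ((ihj (by omega)).trans (Submodule.span_mono hWm)) ?_
        refine Finset.sup_le fun i' hi' => ?_
        have hi'a : i' ≤ a := by
          have := Finset.mem_range.1 hi'; omega
        have hjbb : j < bb := by omega
        have hdiv : (bb * i' + j) / bb = i' := by
          rw [Nat.mul_add_div hbb, Nat.div_eq_of_lt hjbb, add_zero]
        have hmod : (bb * i' + j) % bb = j := by
          rw [Nat.mul_add_mod, Nat.mod_eq_of_lt hjbb]
        have hkK : bb * i' + j < K := by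
          have h1 : bb * i' + j < bb * (i' + 1) := by rw [Nat.mul_succ]; omega
          have h2 : bb * (i' + 1) ≤ bb * (a + 1) := Nat.mul_le_mul le_rfl (by omega)
          have h3 : bb * (a + 1) = K := mul_comm bb (a + 1)
          omega
        have hC : C i' j = Submodule.span F (u (bb * i' + j)) := by
          rw [hu2]
          show _ = C ((bb * i' + j) / bb) ((bb * i' + j) % bb)
          rw [hdiv, hmod]
        rw [hC]
        refine Submodule.span_mono ?_
        refine Set.subset_iUnion₂ (s := fun k _ => u k) (bb * i' + j) ?_
        rw [Finset.mem_filter]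
        exact ⟨Finset.mem_range.2 hkK, by omega⟩
    intro j' hj'
    refine le_antisymm ?_ (hge j' hj')
    rw [Submodule.span_le]
    refine Set.iUnion₂_subset fun k hk => ?_
    rw [Finset.mem_filter] at hk
    refine (hu1 k).trans ?_
    have : Cf k ≤ W' j' := (hCleW _ _).trans (hW'mono (by omega))
    exact this
  refine ⟨B, ?_, ?_⟩
  · intro i
    have hle : ((i : ℕ) + 1) * bb ≤ K := Nat.mul_le_mul (by have := i.isLt; omega) le_rfl
    obtain ⟨t, ht⟩ := hB (Uk (((i : ℕ) + 1) * bb)) (hUkmono hle)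
    refine ⟨t, ?_⟩
    rw [← ht, (hUk _).1, hTmul, hV'succ]
  · intro j
    obtain ⟨t, ht⟩ := hB (Ws ((j : ℕ) + 1)) (hWsub _)
    refine ⟨t, ?_⟩
    rw [← ht, hWspan _ (by have := j.isLt; omega), hW'succ]
end
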